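/- Let f and k be natural numbers with 2k ≤ f, and let λ be a partition with |λ| = f − 2k. Then the number of permutation lattices of order f with diagram λ equals (f! / ((f−2k)! · 2^k · k!)) times the number of permutation lattices of order f − 2k with diagram λ all of whose entries are positive (the latter being the number of standard Young tableaux of shape λ). -/

import Mathlib

/-- `θ(k) = 1` if `k > 0` and `0` if `k < 0` (we also set it to `0` at `k = 0`,
a value never used since words have nonzero entries). -/
def theta (k : ℤ) : ℤ := if 0 < k then 1 else 0

/-- `hatCount w i k = #̂_{w^{(i)}}(k)`: the number of indices `1 ≤ j ≤ i` with `w j = k`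
minus the number of indices `1 ≤ j ≤ i` with `w j = -k`.  A word of order `f` is
represented by a function `w : ℕ → ℤ`, its entries being `w 1, …, w f` (1-based). -/
def hatCount (w : ℕ → ℤ) (i : ℕ) (k : ℤ) : ℤ :=
  (((Finset.Icc 1 i).filter fun j => w j = k).card : ℤ) -
    (((Finset.Icc 1 i).filter fun j => w j = -k).card : ℤ)

/-- `w : ℕ → ℤ` is a permutation lattice of order `f`: all entries `w 1, …, w f` are
nonzero, and for every prefix `w^{(i)}` (`1 ≤ i ≤ f`) the sequence
`k ↦ #̂_{w^{(i)}}(k)` (`k ≥ 1`) is weakly decreasing with nonnegative terms. -/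
def IsPermLattice (f : ℕ) (w : ℕ → ℤ) : Prop :=
  (∀ i, 1 ≤ i → i ≤ f → w i ≠ 0) ∧
  ∀ i, 1 ≤ i → i ≤ f → ∀ k : ℤ, 1 ≤ k →
    hatCount w i (k + 1) ≤ hatCount w i k ∧ 0 ≤ hatCount w i k

/-- The transpose word: `(w^t)_i = #̂_{w^{(i-1)}}(w_i) + θ(w_i)`. -/
def transposePL (w : ℕ → ℤ) : ℕ → ℤ := fun i => hatCount w (i - 1) (w i) + theta (w i)


namespace PL

lemma hatCount_zero (w : ℕ → ℤ) (k : ℤ) : hatCount w 0 k = 0 := by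
  simp [hatCount]

lemma hatCount_congr {w w' : ℕ → ℤ} {i : ℕ} (k : ℤ)
    (h : ∀ j, 1 ≤ j → j ≤ i → w j = w' j) : hatCount w i k = hatCount w' i k := by
  unfold hatCount
  congr 2
  all_goals
    congr 1
    apply Finset.filter_congr
    intro j hj
    simp only [Finset.mem_Icc] at hj
    simp [h j hj.1 hj.2]

lemma hatCount_succ (w : ℕ → ℤ) (i : ℕ) (k : ℤ) :
    hatCount w (i + 1) k = hatCount w i k + (if w (i + 1) = k then 1 else 0)
      - (if w (i + 1) = -k then 1 else 0) := by
  have h : Finset.Icc 1 (i + 1) = insert (i + 1) (Finset.Icc 1 i) := by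
    ext j; simp [Finset.mem_Icc]; omega
  have hnm : (i + 1) ∉ Finset.Icc 1 i := by simp
  unfold hatCount
  rw [h, Finset.filter_insert, Finset.filter_insert]
  split <;> split <;>
    simp_all [Finset.card_insert_of_notMem (fun hm => hnm (Finset.mem_filter.mp hm).1)] <;>
    ring

/-- sum of hatCounts over any range is at most `i`. -/
lemma sum_hat_le (w : ℕ → ℤ) (M : ℕ) : ∀ i : ℕ,
    ∑ r ∈ Finset.Icc 1 M, hatCount w i (r : ℤ) ≤ (i : ℤ) := by
  intro i
  induction i with
  | zero => simp [hatCount_zero]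
  | succ i ih =>
    have : ∑ r ∈ Finset.Icc 1 M, hatCount w (i+1) (r : ℤ) ≤
        (∑ r ∈ Finset.Icc 1 M, hatCount w i (r : ℤ)) +
        ∑ r ∈ Finset.Icc 1 M, (if w (i+1) = (r:ℤ) then (1:ℤ) else 0) := by
      rw [← Finset.sum_add_distrib]
      apply Finset.sum_le_sum
      intro r _
      rw [hatCount_succ]
      have : (0:ℤ) ≤ (if w (i + 1) = -(r:ℤ) then 1 else 0) := by positivity
      omega
    have h2 : ∑ r ∈ Finset.Icc 1 M, (if w (i+1) = (r:ℤ) then (1:ℤ) else 0) ≤ 1 := by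
      by_cases hc : ∃ r ∈ Finset.Icc 1 M, w (i+1) = (r:ℤ)
      · obtain ⟨r0, hr0, hval⟩ := hc
        rw [Finset.sum_eq_single_of_mem r0 hr0]
        · simp [hval]
        · intro b hb hne
          have : w (i+1) ≠ (b:ℤ) := by
            intro h
            apply hne
            have : (b:ℤ) = (r0:ℤ) := by rw [← h, hval]
            exact_mod_cast this
          simp [this]
      · push_neg at hc
        rw [Finset.sum_eq_zero]
        · norm_num
        · intro r hr; simp [hc r hr]
    push_cast
    omega


/-- the counted set; `b = true` adds the positivity requirement. -/
def MSet (b : Bool) (f : ℕ) (l : ℕ → ℕ) : Set (ℕ → ℤ) :=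
  {w | (IsPermLattice f w ∧ (∀ j, j = 0 ∨ f < j → w j = 0) ∧
    ∀ r : ℕ, 1 ≤ r → hatCount w f (r : ℤ) = (l r : ℤ)) ∧
    (b = true → ∀ j, 1 ≤ j → j ≤ f → 0 < w j)}

lemma hat_nonneg {f : ℕ} {w : ℕ → ℤ} (h : IsPermLattice f w) {i : ℕ} (hif : i ≤ f)
    {k : ℤ} (hk : 1 ≤ k) : 0 ≤ hatCount w i k := by
  rcases Nat.eq_zero_or_pos i with hi | hi
  · subst hi; simp [hatCount_zero]
  · exact (h.2 i hi hif k hk).2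

lemma hat_anti {f : ℕ} {w : ℕ → ℤ} (h : IsPermLattice f w) {i : ℕ} (hif : i ≤ f)
    {k k' : ℤ} (hk : 1 ≤ k) (hkk : k ≤ k') : hatCount w i k' ≤ hatCount w i k := by
  rcases Nat.eq_zero_or_pos i with hi | hi
  · subst hi; simp [hatCount_zero]
  · obtain ⟨m, hm⟩ : ∃ m : ℕ, k' = k + m := ⟨(k' - k).toNat, by omega⟩
    subst hm
    clear hkk
    induction m with
    | zero => simp
    | succ m ih =>
      have := (h.2 i hi hif (k + m) (by have hmn : (0:ℤ) ≤ (m:ℤ) := Int.natCast_nonneg m; omega)).1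
      have hcast : k + (↑(m+1) : ℤ) = (k + m) + 1 := by push_cast; ring
      rw [hcast]
      omega

/-- `hatCount w i k = 0` for `k > i` in a permutation lattice. -/
lemma hat_eq_zero_of_gt {f : ℕ} {w : ℕ → ℤ} (h : IsPermLattice f w) {i : ℕ} (hif : i ≤ f)
    {k : ℤ} (hk : 1 ≤ k) (hki : (i : ℤ) < k) : hatCount w i k = 0 := by
  have hnn := hat_nonneg h hif hk
  rcases lt_or_ge 0 (hatCount w i k) with hpos | hle
  · exfalso
    -- then all hatCounts for 1 ≤ r ≤ k are ≥ 1, sum > i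
    set M := k.toNat with hM
    have hsum := sum_hat_le w M i
    have hge : ∀ r ∈ Finset.Icc 1 M, (1:ℤ) ≤ hatCount w i (r:ℤ) := by
      intro r hr
      simp only [Finset.mem_Icc] at hr
      have h1 : (1:ℤ) ≤ (r:ℤ) := by exact_mod_cast hr.1
      have h2 : (r:ℤ) ≤ k := by omega
      have := hat_anti h hif h1 h2
      omega
    have : (M : ℤ) ≤ ∑ r ∈ Finset.Icc 1 M, hatCount w i (r:ℤ) := by
      calc (M:ℤ) = ∑ r ∈ Finset.Icc 1 M, (1:ℤ) := by simp
      _ ≤ _ := Finset.sum_le_sum hge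
    omega
  · omega

lemma mem_MSet_decr {b : Bool} {f : ℕ} {l : ℕ → ℕ} {w : ℕ → ℤ} (hw : w ∈ MSet b f l)
    (r : ℕ) (hr : 1 ≤ r) : l (r + 1) ≤ l r := by
  obtain ⟨⟨hpl, hsupp, hdiag⟩, _⟩ := hw
  rcases Nat.eq_zero_or_pos f with hf | hf
  · subst hf
    have h1 := hdiag r hr
    have h2 := hdiag (r+1) (by omega)
    simp [hatCount_zero] at h1 h2
    omega
  · have := (hpl.2 f hf le_rfl (r : ℤ) (by exact_mod_cast hr)).1
    have h1 := hdiag r hr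
    have h2 := hdiag (r+1) (by omega)
    push_cast at h2
    rw [h1, h2] at this
    exact_mod_cast this

lemma mem_MSet_supp {b : Bool} {f : ℕ} {l : ℕ → ℕ} {w : ℕ → ℤ} (hw : w ∈ MSet b f l)
    (r : ℕ) (hr : f < r) : l r = 0 := by
  obtain ⟨⟨hpl, hsupp, hdiag⟩, _⟩ := hw
  have h1 := hdiag r (by omega)
  have h2 : hatCount w f (r : ℤ) = 0 :=
    hat_eq_zero_of_gt hpl le_rfl (by exact_mod_cast Nat.one_le_iff_ne_zero.mpr (by omega))
      (by exact_mod_cast hr)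
  rw [h2] at h1
  exact_mod_cast h1.symm

lemma mem_MSet_size {b : Bool} {f : ℕ} {l : ℕ → ℕ} {w : ℕ → ℤ} (hw : w ∈ MSet b f l)
    (M : ℕ) : ∑ r ∈ Finset.Icc 1 M, l r ≤ f := by
  obtain ⟨⟨hpl, hsupp, hdiag⟩, _⟩ := hw
  have h : (↑(∑ r ∈ Finset.Icc 1 M, l r) : ℤ) = ∑ r ∈ Finset.Icc 1 M, hatCount w f (r:ℤ) := by
    push_cast
    apply Finset.sum_congr rfl
    intro r hr
    simp only [Finset.mem_Icc] at hr
    exact (hdiag r hr.1).symm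
  have := sum_hat_le w M f
  rw [← h] at this
  exact_mod_cast this

/-- entries of a member are bounded: `-f ≤ w j ≤ f`. -/
lemma mem_MSet_bound {b : Bool} {f : ℕ} {l : ℕ → ℕ} {w : ℕ → ℤ} (hw : w ∈ MSet b f l)
    (j : ℕ) : -(f:ℤ) ≤ w j ∧ w j ≤ f := by
  obtain ⟨⟨hpl, hsupp, hdiag⟩, _⟩ := hw
  rcases Nat.eq_zero_or_pos j with hj | hj
  · subst hj; rw [hsupp 0 (Or.inl rfl)]; constructor <;> simp
  rcases le_or_gt j f with hjf | hjf
  · -- 1 ≤ j ≤ f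
    obtain ⟨i, rfl⟩ : ∃ i, j = i + 1 := ⟨j - 1, by omega⟩
    have hsucc := hatCount_succ w i (w (i+1))
    rcases lt_trichotomy (w (i+1)) 0 with hneg | hzero | hpos
    · -- w j = -m
      constructor
      · by_contra hcon
        push_neg at hcon
        -- hatCount w (i+1) (-w j) would need hatCount w i (-w j) ≥ 1, but -w j > f ≥ i
        have h1 : hatCount w i (-(w (i+1))) = 0 :=
          hat_eq_zero_of_gt hpl (by omega) (by omega) (by push_cast; omega)
        have hs2 := hatCount_succ w i (-(w (i+1)))
        have hne : w (i+1) ≠ -(w (i+1)) := by omega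
        rw [h1, if_neg hne, if_pos (by ring_nf)] at hs2
        have := hat_nonneg hpl (i := i+1) (by omega) (k := -(w (i+1))) (by omega)
        omega
      · omega
    · exact absurd hzero (hpl.1 (i+1) (by omega) hjf)
    · constructor
      · omega
      · by_contra hcon
        push_neg at hcon
        have h1 : hatCount w i (w (i+1)) = 0 :=
          hat_eq_zero_of_gt hpl (by omega) (by omega) (by push_cast; omega)
        have h2 : hatCount w (i+1) (w (i+1)) = 0 :=
          hat_eq_zero_of_gt hpl (by omega) (by omega) (by push_cast; omega)
        rw [h1, h2, if_pos rfl, if_neg (by omega)] at hsucc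
        omega
  · rw [hsupp j (Or.inr hjf)]; constructor <;> simp

lemma MSet_finite (b : Bool) (f : ℕ) (l : ℕ → ℕ) : (MSet b f l).Finite := by
  have hsub : (fun (w : ℕ → ℤ) => fun i : Fin (f+1) => w i) '' (MSet b f l) ⊆
      Set.pi Set.univ (fun _ : Fin (f+1) => Set.Icc (-(f:ℤ)) f) := by
    rintro _ ⟨w, hw, rfl⟩
    intro i _
    exact mem_MSet_bound hw i
  have hfin : (Set.pi Set.univ (fun _ : Fin (f+1) => Set.Icc (-(f:ℤ)) (f:ℤ))).Finite :=
    Set.Finite.pi (fun _ => Set.finite_Icc _ _)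
  apply Set.Finite.of_finite_image (hfin.subset hsub)
  intro w hw w' hw' heq
  funext j
  rcases le_or_gt j f with hj | hj
  · have := congrFun heq ⟨j, by omega⟩
    simpa using this
  · rw [hw.1.2.1 j (Or.inr hj), hw'.1.2.1 j (Or.inr hj)]

lemma MSet_zero_eq {b : Bool} {l : ℕ → ℕ} (h : ∀ r, 1 ≤ r → l r = 0) :
    MSet b 0 l = {fun _ => 0} := by
  ext w
  constructor
  · rintro ⟨⟨hpl, hsupp, hdiag⟩, _⟩
    funext j
    exact hsupp j (by omega)
  · rintro rfl
    refine ⟨⟨⟨fun i h1 h2 => by omega, fun i h1 h2 => by omega⟩, fun j hj => rfl,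
      fun r hr => by simp [hatCount_zero, h r hr]⟩, fun _ j h1 h2 => by omega⟩

lemma MSet_zero_empty {b : Bool} {l : ℕ → ℕ} (h : ¬ ∀ r, 1 ≤ r → l r = 0) :
    MSet b 0 l = ∅ := by
  ext w
  simp only [Set.mem_empty_iff_false, iff_false]
  rintro ⟨⟨hpl, hsupp, hdiag⟩, _⟩
  apply h
  intro r hr
  have := hdiag r hr
  rw [hatCount_zero] at this
  exact_mod_cast this.symm

lemma MSet_empty_of_not_decr {b : Bool} {f : ℕ} {l : ℕ → ℕ}
    (h : ¬ ∀ r, 1 ≤ r → l (r+1) ≤ l r) : MSet b f l = ∅ := by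
  ext w
  simp only [Set.mem_empty_iff_false, iff_false]
  intro hw
  exact h (fun r hr => mem_MSet_decr hw r hr)

lemma MSet_empty_of_size {b : Bool} {f : ℕ} {l : ℕ → ℕ} {M : ℕ}
    (h : f < ∑ r ∈ Finset.Icc 1 M, l r) : MSet b f l = ∅ := by
  ext w
  simp only [Set.mem_empty_iff_false, iff_false]
  intro hw
  have := mem_MSet_size hw M
  omega

/-! ### The last-letter recurrence -/

def dec (l : ℕ → ℕ) (r : ℕ) : ℕ → ℕ := Function.update l r (l r - 1)
def inc (l : ℕ → ℕ) (r : ℕ) : ℕ → ℕ := Function.update l r (l r + 1)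

lemma dec_apply (l : ℕ → ℕ) (r s : ℕ) : dec l r s = if s = r then l r - 1 else l s := by
  simp [dec, Function.update_apply]

lemma inc_apply (l : ℕ → ℕ) (r s : ℕ) : inc l r s = if s = r then l r + 1 else l s := by
  simp [inc, Function.update_apply]

lemma dec_cast {l : ℕ → ℕ} {r : ℕ} (h : 1 ≤ l r) (s : ℕ) :
    ((dec l r s : ℕ) : ℤ) = (l s : ℤ) - (if s = r then 1 else 0) := by
  rw [dec_apply]
  split <;> rename_i hsr
  · subst hsr; push_cast [Nat.cast_sub h]; ring
  · simp

lemma inc_cast (l : ℕ → ℕ) (r : ℕ) (s : ℕ) :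
    ((inc l r s : ℕ) : ℤ) = (l s : ℤ) + (if s = r then 1 else 0) := by
  rw [inc_apply]
  split <;> rename_i hsr
  · subst hsr; push_cast; ring
  · simp

/-- the slice of `MSet` by last letter. -/
def Sc (b : Bool) (f : ℕ) (l : ℕ → ℕ) (c : ℤ) : Set (ℕ → ℤ) :=
  {w ∈ MSet b f l | w f = c}

lemma hatCount_update_of_lt (w : ℕ → ℤ) (f : ℕ) (c : ℤ) {i : ℕ} (hi : i < f) (k : ℤ) :
    hatCount (Function.update w f c) i k = hatCount w i k := by
  apply hatCount_congr
  intro j h1 h2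
  rw [Function.update_of_ne (by omega)]

lemma slice_pos_lr {b : Bool} {f : ℕ} {l : ℕ → ℕ} {w : ℕ → ℤ} (hf : 1 ≤ f)
    (hw : w ∈ MSet b f l) {r : ℕ} (hr : 1 ≤ r) (hwf : w f = (r : ℤ)) : 1 ≤ l r := by
  obtain ⟨⟨hpl, hsupp, hdiag⟩, _⟩ := hw
  have hdg := hdiag r hr
  have hs := hatCount_succ w (f - 1) (r : ℤ)
  have hf1 : f - 1 + 1 = f := by omega
  rw [hf1] at hs
  have hnn : 0 ≤ hatCount w (f-1) (r : ℤ) := hat_nonneg hpl (by omega) (by exact_mod_cast hr)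
  rw [hwf] at hs
  rw [if_pos rfl, if_neg (by push_cast; omega)] at hs
  rw [hdg] at hs
  omega

lemma slice_pos_empty {b : Bool} {f : ℕ} {l : ℕ → ℕ} (hf : 1 ≤ f) {r : ℕ} (hr : 1 ≤ r)
    (hlr : l r = 0) : Sc b f l (r : ℤ) = ∅ := by
  ext w
  simp only [Set.mem_empty_iff_false, iff_false, Sc, Set.mem_setOf_eq, Set.mem_sep_iff]
  rintro ⟨hw, hwf⟩
  have := slice_pos_lr hf hw hr hwf
  omega

lemma slice_neg_empty_of_pos {f : ℕ} {l : ℕ → ℕ} (hf : 1 ≤ f) {r : ℕ} (hr : 1 ≤ r) :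
    Sc true f l (-(r : ℤ)) = ∅ := by
  ext w
  simp only [Set.mem_empty_iff_false, iff_false, Sc, Set.mem_setOf_eq, Set.mem_sep_iff]
  rintro ⟨hw, hwf⟩
  have := hw.2 rfl f hf le_rfl
  rw [hwf] at this
  have : (0:ℤ) < -(r:ℤ) := this
  omega

lemma update_injOn (f : ℕ) (c : ℤ) :
    Set.InjOn (fun w => Function.update w f 0) {w : ℕ → ℤ | w f = c} := by
  intro w hw w' hw' heq
  funext j
  rcases eq_or_ne j f with rfl | hj
  · rw [Set.mem_setOf_eq] at hw hw'
    rw [hw, hw']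
  · have := congrFun heq j
    simpa [Function.update_of_ne hj] using this

lemma drop_mem {b : Bool} {f : ℕ} (hf : 1 ≤ f) {l : ℕ → ℕ} {w : ℕ → ℤ}
    (hw : w ∈ MSet b f l) (l' : ℕ → ℕ)
    (hl' : ∀ s : ℕ, 1 ≤ s → hatCount w (f - 1) (s : ℤ) = (l' s : ℤ)) :
    Function.update w f 0 ∈ MSet b (f - 1) l' := by
  obtain ⟨⟨hpl, hsupp, hdiag⟩, hposb⟩ := hw
  have hupd : ∀ j, j ≠ f → Function.update w f 0 j = w j :=
    fun j hj => Function.update_of_ne hj _ _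
  refine ⟨⟨⟨?_, ?_⟩, ?_, ?_⟩, ?_⟩
  · intro i h1 h2
    rw [hupd i (by omega)]
    exact hpl.1 i h1 (by omega)
  · intro i h1 h2 k hk
    rw [hatCount_update_of_lt w f 0 (by omega)]
    rw [hatCount_update_of_lt w f 0 (by omega)]
    exact hpl.2 i h1 (by omega) k hk
  · intro j hj
    rcases eq_or_ne j f with rfl | hjf
    · simp
    · rw [hupd j hjf]; exact hsupp j (by omega)
  · intro s hs
    rw [hatCount_update_of_lt w f 0 (by omega)]
    exact hl' s hs
  · intro hb j h1 h2
    rw [hupd j (by omega)]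
    exact hposb hb j h1 (by omega)

lemma extend_mem {b : Bool} {f : ℕ} (hf : 1 ≤ f) {l l' : ℕ → ℕ} {v : ℕ → ℤ}
    (hdec : ∀ r, 1 ≤ r → l (r+1) ≤ l r)
    (hv : v ∈ MSet b (f - 1) l') (c : ℤ) (hc : c ≠ 0) (hcb : b = true → 0 < c)
    (hval : ∀ m : ℕ, 1 ≤ m →
      hatCount (Function.update v f c) f (m : ℤ) = (l m : ℤ)) :
    Function.update v f c ∈ MSet b f l := by
  obtain ⟨⟨hpl, hsupp, hdiag⟩, hposb⟩ := hv
  refine ⟨⟨⟨?_, ?_⟩, ?_, ?_⟩, ?_⟩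
  · intro i h1 h2
    rcases eq_or_ne i f with rfl | hif
    · rw [Function.update_self]; exact hc
    · rw [Function.update_of_ne hif]
      exact hpl.1 i h1 (by omega)
  · intro i h1 h2 k hk
    rcases eq_or_ne i f with rfl | hif
    · obtain ⟨m, rfl⟩ : ∃ m : ℕ, k = (m : ℤ) := ⟨k.toNat, by omega⟩
      have h1' := hval m (by exact_mod_cast hk)
      have h2' := hval (m+1) (by omega)
      push_cast at h2'
      rw [h1', h2']
      constructor
      · exact_mod_cast hdec m (by exact_mod_cast hk)
      · positivity
    · rw [hatCount_update_of_lt v f _ (by omega), hatCount_update_of_lt v f _ (by omega)]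
      exact hpl.2 i h1 (by omega) k hk
  · intro j hj
    rcases hj with rfl | hj
    · rw [Function.update_of_ne (by omega)]; exact hsupp 0 (Or.inl rfl)
    · rw [Function.update_of_ne (by omega)]; exact hsupp j (Or.inr (by omega))
  · intro s hs
    exact hval s hs
  · intro hb j h1 h2
    rcases eq_or_ne j f with rfl | hjf
    · rw [Function.update_self]; exact hcb hb
    · rw [Function.update_of_ne hjf]
      exact hposb hb j h1 (by omega)

lemma drop_eq {f : ℕ} (hf : 1 ≤ f) {v : ℕ → ℤ} (hvf : v f = 0) (c : ℤ) :
    Function.update (Function.update v f c) f 0 = v := by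
  rw [Function.update_idem, ← hvf]
  exact Function.update_eq_self f v

lemma slice_pos_image (b : Bool) {f : ℕ} (hf : 1 ≤ f) {l : ℕ → ℕ}
    (hdec : ∀ r, 1 ≤ r → l (r+1) ≤ l r) {r : ℕ} (hr : 1 ≤ r) (hrf : r ≤ f) (hlr : 1 ≤ l r) :
    (fun w => Function.update w f 0) '' (Sc b f l (r : ℤ)) = MSet b (f - 1) (dec l r) := by
  have hf1 : f - 1 + 1 = f := by omega
  ext v
  constructor
  · rintro ⟨w, ⟨hw, hwf⟩, rfl⟩
    apply drop_mem hf hw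
    intro s hs
    have hsucc := hatCount_succ w (f-1) (s : ℤ)
    rw [hf1, hwf] at hsucc
    rw [hw.1.2.2 s hs] at hsucc
    rw [if_neg (show ¬((r:ℤ) = -(s:ℤ)) by push_cast; omega)] at hsucc
    rw [dec_cast hlr s]
    by_cases hc : s = r
    · rw [if_pos (show ((r:ℤ) = (s:ℤ)) by exact_mod_cast hc.symm)] at hsucc
      rw [if_pos hc]; omega
    · rw [if_neg (show ¬((r:ℤ) = (s:ℤ)) by push_cast; omega)] at hsucc
      rw [if_neg hc]; omega
  · intro hv
    have hvf : v f = 0 := hv.1.2.1 f (Or.inr (by omega))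
    have hval : ∀ m : ℕ, 1 ≤ m →
        hatCount (Function.update v f (r:ℤ)) f (m : ℤ) = (l m : ℤ) := by
      intro m hm
      have hsucc := hatCount_succ (Function.update v f (r:ℤ)) (f-1) (m : ℤ)
      rw [hf1] at hsucc
      rw [hatCount_update_of_lt v f _ (show f - 1 < f by omega)] at hsucc
      rw [Function.update_self] at hsucc
      rw [hv.1.2.2 m hm, dec_cast hlr m] at hsucc
      rw [if_neg (show ¬((r:ℤ) = -(m:ℤ)) by push_cast; omega)] at hsucc
      by_cases hc : m = r
      · rw [if_pos (show ((r:ℤ) = (m:ℤ)) by exact_mod_cast hc.symm)] at hsucc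
        rw [hsucc, if_pos hc]; ring
      · rw [if_neg (show ¬((r:ℤ) = (m:ℤ)) by push_cast; omega)] at hsucc
        rw [hsucc, if_neg hc]; ring
    refine ⟨Function.update v f (r : ℤ), ⟨?_, Function.update_self f _ v⟩, drop_eq hf hvf _⟩
    exact extend_mem hf hdec hv (r : ℤ) (by exact_mod_cast Nat.one_le_iff_ne_zero.mp hr)
      (fun _ => by exact_mod_cast hr) hval

lemma slice_neg_image {f : ℕ} (hf : 1 ≤ f) {l : ℕ → ℕ}
    (hdec : ∀ r, 1 ≤ r → l (r+1) ≤ l r) {r : ℕ} (hr : 1 ≤ r) (hrf : r ≤ f) :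
    (fun w => Function.update w f 0) '' (Sc false f l (-(r : ℤ))) =
      MSet false (f - 1) (inc l r) := by
  have hf1 : f - 1 + 1 = f := by omega
  ext v
  constructor
  · rintro ⟨w, ⟨hw, hwf⟩, rfl⟩
    apply drop_mem hf hw
    intro s hs
    have hsucc := hatCount_succ w (f-1) (s : ℤ)
    rw [hf1, hwf] at hsucc
    rw [hw.1.2.2 s hs] at hsucc
    rw [if_neg (show ¬(-(r:ℤ) = (s:ℤ)) by push_cast; omega)] at hsucc
    rw [inc_cast l r s]
    by_cases hc : s = r
    · rw [if_pos (show (-(r:ℤ) = -(s:ℤ)) by rw [hc])] at hsucc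
      rw [if_pos hc]; omega
    · rw [if_neg (show ¬(-(r:ℤ) = -(s:ℤ)) by push_cast; omega)] at hsucc
      rw [if_neg hc]; omega
  · intro hv
    have hvf : v f = 0 := hv.1.2.1 f (Or.inr (by omega))
    have hval : ∀ m : ℕ, 1 ≤ m →
        hatCount (Function.update v f (-(r:ℤ))) f (m : ℤ) = (l m : ℤ) := by
      intro m hm
      have hsucc := hatCount_succ (Function.update v f (-(r:ℤ))) (f-1) (m : ℤ)
      rw [hf1] at hsucc
      rw [hatCount_update_of_lt v f _ (show f - 1 < f by omega)] at hsucc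
      rw [Function.update_self] at hsucc
      rw [hv.1.2.2 m hm, inc_cast l r m] at hsucc
      rw [if_neg (show ¬(-(r:ℤ) = (m:ℤ)) by push_cast; omega)] at hsucc
      by_cases hc : m = r
      · rw [if_pos (show (-(r:ℤ) = -(m:ℤ)) by rw [hc])] at hsucc
        rw [hsucc, if_pos hc]; ring
      · rw [if_neg (show ¬(-(r:ℤ) = -(m:ℤ)) by push_cast; omega)] at hsucc
        rw [hsucc, if_neg hc]; ring
    refine ⟨Function.update v f (-(r : ℤ)), ⟨?_, Function.update_self f _ v⟩, drop_eq hf hvf _⟩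
    exact extend_mem hf hdec hv (-(r : ℤ)) (by push_cast; omega)
      (fun h => by simp at h) hval

lemma ncard_biUnion {α ι : Type*} (s : Finset ι) (t : ι → Set α)
    (hfin : ∀ i ∈ s, (t i).Finite)
    (hdisj : ∀ i ∈ s, ∀ j ∈ s, i ≠ j → Disjoint (t i) (t j)) :
    (⋃ i ∈ s, t i).ncard = ∑ i ∈ s, (t i).ncard := by
  classical
  induction s using Finset.induction with
  | empty => simp
  | @insert a s ha ih =>
    rw [Finset.set_biUnion_insert]
    have hdis : Disjoint (t a) (⋃ i ∈ s, t i) := by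
      rw [Set.disjoint_iUnion_right]
      intro i
      rw [Set.disjoint_iUnion_right]
      intro hi
      exact hdisj a (Finset.mem_insert_self a s) i (Finset.mem_insert_of_mem hi)
        (fun h => ha (h ▸ hi))
    have hfin2 : (⋃ i ∈ s, t i).Finite :=
      Set.Finite.biUnion s.finite_toSet (fun i hi => hfin i (Finset.mem_insert_of_mem hi))
    rw [Set.ncard_union_eq hdis (hfin a (Finset.mem_insert_self a s)) hfin2]
    rw [Finset.sum_insert ha]
    rw [ih (fun i hi => hfin i (Finset.mem_insert_of_mem hi))
      (fun i hi j hj hij => hdisj i (Finset.mem_insert_of_mem hi) j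
        (Finset.mem_insert_of_mem hj) hij)]

lemma MSet_eq_union (b : Bool) {f : ℕ} (hf : 1 ≤ f) (l : ℕ → ℕ) :
    MSet b f l = (⋃ r ∈ Finset.Icc 1 f, Sc b f l (r : ℤ)) ∪
      (⋃ r ∈ Finset.Icc 1 f, Sc b f l (-(r : ℤ))) := by
  ext w
  constructor
  · intro hw
    have hb := mem_MSet_bound hw f
    have hnz : w f ≠ 0 := hw.1.1.1 f hf le_rfl
    rcases lt_or_gt_of_ne hnz with hneg | hpos
    · right
      simp only [Set.mem_iUnion]
      refine ⟨(w f).natAbs, ?_, hw, ?_⟩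
      · simp only [Finset.mem_Icc]; omega
      · simp only [Int.natCast_natAbs]
        rw [abs_of_neg hneg]; ring
    · left
      simp only [Set.mem_iUnion]
      refine ⟨(w f).natAbs, ?_, hw, ?_⟩
      · simp only [Finset.mem_Icc]; omega
      · simp only [Int.natCast_natAbs]
        rw [abs_of_pos hpos]
  · rintro (hw | hw) <;>
    · simp only [Set.mem_iUnion] at hw
      obtain ⟨r, hr, hmem, _⟩ := hw
      exact hmem

lemma Sc_finite (b : Bool) (f : ℕ) (l : ℕ → ℕ) (c : ℤ) : (Sc b f l c).Finite :=
  (MSet_finite b f l).subset (Set.sep_subset _ _)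

lemma MSet_rec (b : Bool) {f : ℕ} (hf : 1 ≤ f) (l : ℕ → ℕ)
    (hdec : ∀ r, 1 ≤ r → l (r+1) ≤ l r) :
    (MSet b f l).ncard =
      (∑ r ∈ Finset.Icc 1 f, if 1 ≤ l r then (MSet b (f-1) (dec l r)).ncard else 0)
      + (if b = true then 0 else ∑ r ∈ Finset.Icc 1 f, (MSet false (f-1) (inc l r)).ncard) := by
  classical
  rw [MSet_eq_union b hf l]
  have hdisjPN : Disjoint (⋃ r ∈ Finset.Icc 1 f, Sc b f l (r : ℤ))
      (⋃ r ∈ Finset.Icc 1 f, Sc b f l (-(r : ℤ))) := by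
    rw [Set.disjoint_left]
    intro w hw hw'
    simp only [Set.mem_iUnion] at hw hw'
    obtain ⟨r, hr, _, hwf⟩ := hw
    obtain ⟨r', hr', _, hwf'⟩ := hw'
    simp only [Finset.mem_Icc] at hr hr'
    rw [hwf] at hwf'
    omega
  have hfinP : (⋃ r ∈ Finset.Icc 1 f, Sc b f l (r : ℤ)).Finite :=
    Set.Finite.biUnion (Finset.Icc 1 f).finite_toSet (fun r _ => Sc_finite b f l _)
  have hfinN : (⋃ r ∈ Finset.Icc 1 f, Sc b f l (-(r : ℤ))).Finite :=
    Set.Finite.biUnion (Finset.Icc 1 f).finite_toSet (fun r _ => Sc_finite b f l _)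
  rw [Set.ncard_union_eq hdisjPN hfinP hfinN]
  have hdisjP : ∀ r ∈ Finset.Icc 1 f, ∀ r' ∈ Finset.Icc 1 f, r ≠ r' →
      Disjoint (Sc b f l (r : ℤ)) (Sc b f l ((r' : ℕ) : ℤ)) := by
    intro r hr r' hr' hne
    rw [Set.disjoint_left]
    rintro w ⟨_, hwf⟩ ⟨_, hwf'⟩
    rw [hwf] at hwf'
    exact hne (by exact_mod_cast hwf')
  have hdisjN : ∀ r ∈ Finset.Icc 1 f, ∀ r' ∈ Finset.Icc 1 f, r ≠ r' →
      Disjoint (Sc b f l (-(r : ℤ))) (Sc b f l (-((r' : ℕ) : ℤ))) := by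
    intro r hr r' hr' hne
    rw [Set.disjoint_left]
    rintro w ⟨_, hwf⟩ ⟨_, hwf'⟩
    rw [hwf] at hwf'
    have : (r : ℤ) = (r' : ℤ) := by omega
    exact hne (by exact_mod_cast this)
  rw [ncard_biUnion _ _ (fun r _ => Sc_finite b f l _) hdisjP]
  rw [ncard_biUnion _ _ (fun r _ => Sc_finite b f l _) hdisjN]
  congr 1
  · apply Finset.sum_congr rfl
    intro r hr
    simp only [Finset.mem_Icc] at hr
    by_cases hlr : 1 ≤ l r
    · rw [if_pos hlr]
      rw [← slice_pos_image b hf hdec hr.1 hr.2 hlr]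
      exact (Set.ncard_image_of_injOn ((update_injOn f (r:ℤ)).mono
        (show Sc b f l (r:ℤ) ⊆ {w : ℕ → ℤ | w f = (r:ℤ)} from fun w hw => hw.2))).symm
    · rw [if_neg hlr]
      rw [slice_pos_empty hf hr.1 (by omega)]
      simp
  · cases b with
    | true =>
      rw [if_pos rfl]
      apply Finset.sum_eq_zero
      intro r hr
      simp only [Finset.mem_Icc] at hr
      rw [slice_neg_empty_of_pos hf hr.1]
      simp
    | false =>
      rw [if_neg (by simp)]
      apply Finset.sum_congr rfl
      intro r hr
      simp only [Finset.mem_Icc] at hr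
      rw [← slice_neg_image hf hdec hr.1 hr.2]
      exact (Set.ncard_image_of_injOn ((update_injOn f (-(r:ℤ))).mono
        (show Sc false f l (-(r:ℤ)) ⊆ {w : ℕ → ℤ | w f = -(r:ℤ)} from fun w hw => hw.2))).symm

/-! ### Partition bookkeeping -/

noncomputable def Nc (f : ℕ) (l : ℕ → ℕ) : ℕ := (MSet false f l).ncard
noncomputable def Pc (f : ℕ) (l : ℕ → ℕ) : ℕ := (MSet true f l).ncard

def addF (l : ℕ → ℕ) (B : ℕ) : Finset ℕ :=
  (Finset.Icc 1 B).filter (fun r => r = 1 ∨ l r < l (r-1))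
def remF (l : ℕ → ℕ) (B : ℕ) : Finset ℕ :=
  (Finset.Icc 1 B).filter (fun r => l (r+1) < l r)

section PartitionFacts

variable {l : ℕ → ℕ} {n : ℕ}

lemma l_anti (hdec : ∀ r, 1 ≤ r → l (r+1) ≤ l r) :
    ∀ r r', 1 ≤ r → r ≤ r' → l r' ≤ l r := by
  intro r r' h1 h2
  obtain ⟨m, rfl⟩ : ∃ m, r' = r + m := ⟨r' - r, by omega⟩
  clear h2
  induction m with
  | zero => simp
  | succ m ih =>
    have := hdec (r + m) (by omega)
    have h' : r + (m+1) = (r + m) + 1 := by omega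
    rw [h']
    omega

/-- if the `n`-th row of a partition of size `n ≥ 1` is nonempty, all rows are `1`. -/
lemma all_one (hdec : ∀ r, 1 ≤ r → l (r+1) ≤ l r)
    (hsize : ∑ r ∈ Finset.Icc 1 n, l r = n) (hn : 1 ≤ n) (h : 1 ≤ l n) :
    ∀ r, 1 ≤ r → r ≤ n → l r = 1 := by
  have hge : ∀ r ∈ Finset.Icc 1 n, 1 ≤ l r := by
    intro r hr
    simp only [Finset.mem_Icc] at hr
    have := l_anti hdec r n hr.1 hr.2
    omega
  by_contra hcon
  push_neg at hcon
  obtain ⟨s, hs1, hs2, hs3⟩ := hcon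
  have hs : 2 ≤ l s := by
    have := hge s (Finset.mem_Icc.mpr ⟨hs1, hs2⟩)
    omega
  have : ∑ r ∈ Finset.Icc 1 n, (1:ℕ) < ∑ r ∈ Finset.Icc 1 n, l r := by
    apply Finset.sum_lt_sum hge
    exact ⟨s, Finset.mem_Icc.mpr ⟨hs1, hs2⟩, by omega⟩
  simp only [Finset.sum_const, smul_eq_mul, mul_one, Nat.card_Icc] at this
  omega

lemma rem_le (hsupp : ∀ r, n < r → l r = 0) {s : ℕ} (hs : l (s+1) < l s) : s ≤ n := by
  by_contra h
  push_neg at h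
  have := hsupp s h
  omega

lemma add_le (hsupp : ∀ r, n < r → l r = 0) {r : ℕ} (h1 : 1 ≤ r)
    (hs : r = 1 ∨ l r < l (r-1)) : r ≤ n + 1 := by
  rcases hs with rfl | hs
  · omega
  · by_contra h
    push_neg at h
    have := hsupp (r-1) (by omega)
    omega

lemma remF_eq (hsupp : ∀ r, n < r → l r = 0) {F : ℕ} (hF : n ≤ F) :
    remF l F = remF l n := by
  ext s
  simp only [remF, Finset.mem_filter, Finset.mem_Icc]
  constructor
  · rintro ⟨⟨h1, h2⟩, h3⟩
    exact ⟨⟨h1, rem_le hsupp h3⟩, h3⟩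
  · rintro ⟨⟨h1, h2⟩, h3⟩
    exact ⟨⟨h1, by omega⟩, h3⟩

lemma addF_eq (hsupp : ∀ r, n < r → l r = 0) {F : ℕ} (hF : n + 1 ≤ F) :
    addF l F = addF l (n+1) := by
  ext r
  simp only [addF, Finset.mem_filter, Finset.mem_Icc]
  constructor
  · rintro ⟨⟨h1, h2⟩, h3⟩
    exact ⟨⟨h1, add_le hsupp h1 h3⟩, h3⟩
  · rintro ⟨⟨h1, h2⟩, h3⟩
    exact ⟨⟨h1, by omega⟩, h3⟩

/-- number of addable corners is one more than the number of removable corners. -/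
lemma addF_card (hdec : ∀ r, 1 ≤ r → l (r+1) ≤ l r) (hsupp : ∀ r, n < r → l r = 0) :
    (addF l (n+1)).card = (remF l (n+1)).card + 1 := by
  classical
  have key : addF l (n+1) = insert 1 ((remF l (n+1)).image (· + 1)) := by
    ext r
    simp only [addF, remF, Finset.mem_insert, Finset.mem_image, Finset.mem_filter,
      Finset.mem_Icc]
    constructor
    · rintro ⟨⟨h1, h2⟩, h3⟩
      rcases eq_or_ne r 1 with rfl | hne
      · left; rfl
      · right
        rcases h3 with rfl | h3
        · omega
        have hr1 : r - 1 + 1 = r := by omega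
        have h3' : l (r - 1 + 1) < l (r - 1) := by rw [hr1]; exact h3
        have hb : r - 1 ≤ n := rem_le hsupp h3'
        exact ⟨r - 1, ⟨⟨by omega, by omega⟩, h3'⟩, by omega⟩
    · rintro (rfl | ⟨s, ⟨⟨hs1, hs2⟩, hs3⟩, rfl⟩)
      · exact ⟨⟨le_rfl, by omega⟩, Or.inl rfl⟩
      · have hb : s ≤ n := rem_le hsupp hs3
        refine ⟨⟨by omega, by omega⟩, Or.inr ?_⟩
        simpa using hs3
  rw [key]
  rw [Finset.card_insert_of_notMem]
  · rw [Finset.card_image_of_injective _ (fun a b h => by omega)]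
  · simp only [Finset.mem_image]
    rintro ⟨s, hs, habs⟩
    have : 1 ≤ s := (Finset.mem_Icc.mp (Finset.mem_filter.mp hs).1).1
    omega

/-! maintenance of the partition invariants under `dec`/`inc` -/

lemma dec_dec (hdec : ∀ r, 1 ≤ r → l (r+1) ≤ l r) {s : ℕ} (hs1 : 1 ≤ s)
    (hrem : l (s+1) < l s) : ∀ r, 1 ≤ r → dec l s (r+1) ≤ dec l s r := by
  intro r hr
  rw [dec_apply, dec_apply]
  by_cases h1 : r + 1 = s
  · rw [if_pos h1, if_neg (by omega)]
    have := hdec r hr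
    rw [← h1]
    omega
  · rw [if_neg h1]
    by_cases h2 : r = s
    · rw [if_pos h2]; subst h2; omega
    · rw [if_neg h2]; exact hdec r hr

lemma inc_dec (hdec : ∀ r, 1 ≤ r → l (r+1) ≤ l r) {r : ℕ} (hr1 : 1 ≤ r)
    (hadd : r = 1 ∨ l r < l (r-1)) : ∀ t, 1 ≤ t → inc l r (t+1) ≤ inc l r t := by
  intro t ht
  rw [inc_apply, inc_apply]
  by_cases h1 : t + 1 = r
  · rw [if_pos h1, if_neg (by omega)]
    rcases hadd with rfl | hadd
    · omega
    · have : t = r - 1 := by omega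
      subst this
      omega
  · rw [if_neg h1]
    by_cases h2 : t = r
    · rw [if_pos h2, h2]; have := hdec r hr1; omega
    · rw [if_neg h2]; exact hdec t ht

lemma dec_supp (hdec : ∀ r, 1 ≤ r → l (r+1) ≤ l r) (hsupp : ∀ r, n < r → l r = 0)
    (hsize : ∑ r ∈ Finset.Icc 1 n, l r = n) {s : ℕ} (hs1 : 1 ≤ s)
    (hrem : l (s+1) < l s) : ∀ r, n - 1 < r → dec l s r = 0 := by
  intro r hr
  have hn : 1 ≤ n := by
    have hsn : s ≤ n := rem_le hsupp hrem
    omega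
  rcases lt_or_ge n r with h | h
  · rw [dec_apply]
    by_cases hc : r = s
    · subst hc; rw [if_pos rfl, hsupp r h]
    · rw [if_neg hc]; exact hsupp r h
  · -- r = n
    have hrn : r = n := by omega
    rw [dec_apply]
    by_cases hc : r = s
    · rw [if_pos hc]
      rcases Nat.eq_zero_or_pos (l s) with h0 | h0
      · omega
      · have := all_one hdec hsize hn (by rw [← hrn, hc]; omega) s (by omega)
          (by rw [← hrn, hc])
        omega
    · rw [if_neg hc]
      by_contra hcon
      have hln : 1 ≤ l n := by rw [← hrn]; omega
      have hall := all_one hdec hsize hn hln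
      have hsn : s ≤ n := rem_le hsupp hrem
      have hs' : s < n := by omega
      have h1 := hall s (by omega) (by omega)
      have h2 := hall (s+1) (by omega) (by omega)
      omega

lemma dec_size (hdec : ∀ r, 1 ≤ r → l (r+1) ≤ l r) (hsupp : ∀ r, n < r → l r = 0)
    (hsize : ∑ r ∈ Finset.Icc 1 n, l r = n) {s : ℕ} (hs1 : 1 ≤ s)
    (hrem : l (s+1) < l s) : ∑ r ∈ Finset.Icc 1 (n-1), dec l s r = n - 1 := by
  have hn : 1 ≤ n := by
    have hsn : s ≤ n := rem_le hsupp hrem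
    have : 1 ≤ l s := by omega
    by_contra h
    push_neg at h
    interval_cases n
    have := hsupp s (by omega)
    omega
  have hsn : s ≤ n := rem_le hsupp hrem
  have hmem : s ∈ Finset.Icc 1 n := Finset.mem_Icc.mpr ⟨hs1, hsn⟩
  have hsum : ∑ r ∈ Finset.Icc 1 n, dec l s r = n - 1 := by
    have h1 : ∑ r ∈ Finset.Icc 1 n, dec l s r =
        (l s - 1) + ∑ r ∈ Finset.Icc 1 n \ {s}, l r := by
      rw [show (dec l s : ℕ → ℕ) = Function.update l s (l s - 1) from rfl]
      rw [Finset.sum_update_of_mem hmem]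
    have h2 : ∑ r ∈ Finset.Icc 1 n, l r = l s + ∑ r ∈ Finset.Icc 1 n \ {s}, l r := by
      rw [← Finset.erase_eq]
      exact (Finset.add_sum_erase _ _ hmem).symm
    omega
  have hlast : dec l s n = 0 := dec_supp hdec hsupp hsize hs1 hrem n (by omega)
  have hsplit : ∑ r ∈ Finset.Icc 1 n, dec l s r =
      (∑ r ∈ Finset.Icc 1 (n-1), dec l s r) + dec l s n := by
    have : Finset.Icc 1 n = insert n (Finset.Icc 1 (n-1)) := by
      ext j; simp only [Finset.mem_insert, Finset.mem_Icc]; omega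
    rw [this, Finset.sum_insert (by simp only [Finset.mem_Icc]; omega)]
    ring
  omega

lemma inc_supp (hsupp : ∀ r, n < r → l r = 0) {r : ℕ} (hr : r ≤ n + 1) :
    ∀ t, n + 1 < t → inc l r t = 0 := by
  intro t ht
  rw [inc_apply, if_neg (by omega)]
  exact hsupp t (by omega)

lemma inc_size (hsupp : ∀ r, n < r → l r = 0)
    (hsize : ∑ r ∈ Finset.Icc 1 n, l r = n) {r : ℕ} (hr1 : 1 ≤ r) (hr : r ≤ n + 1) :
    ∑ t ∈ Finset.Icc 1 (n+1), inc l r t = n + 1 := by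
  have hmem : r ∈ Finset.Icc 1 (n+1) := Finset.mem_Icc.mpr ⟨hr1, hr⟩
  have h1 : ∑ t ∈ Finset.Icc 1 (n+1), inc l r t =
      (l r + 1) + ∑ t ∈ Finset.Icc 1 (n+1) \ {r}, l t := by
    rw [show (inc l r : ℕ → ℕ) = Function.update l r (l r + 1) from rfl]
    rw [Finset.sum_update_of_mem hmem]
  have h2 : ∑ t ∈ Finset.Icc 1 (n+1), l t = l r + ∑ t ∈ Finset.Icc 1 (n+1) \ {r}, l t := by
    rw [← Finset.erase_eq]
    exact (Finset.add_sum_erase _ _ hmem).symm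
  have h3 : ∑ t ∈ Finset.Icc 1 (n+1), l t = n := by
    have : Finset.Icc 1 (n+1) = insert (n+1) (Finset.Icc 1 n) := by
      ext j; simp only [Finset.mem_insert, Finset.mem_Icc]; omega
    rw [this, Finset.sum_insert (by simp only [Finset.mem_Icc]; omega), hsupp (n+1) (by omega)]
    omega
  omega

end PartitionFacts

/-! ### Restricted recurrences -/

lemma MSet_dec_empty_of_not_rem (b : Bool) (F : ℕ) {l : ℕ → ℕ} {s : ℕ} (hs1 : 1 ≤ s)
    (hls : 1 ≤ l s) (hnr : l s ≤ l (s+1)) : MSet b F (dec l s) = ∅ := by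
  apply MSet_empty_of_not_decr
  intro hall
  have := hall s hs1
  rw [dec_apply, dec_apply, if_pos rfl, if_neg (by omega)] at this
  omega

lemma MSet_inc_empty_of_not_add (b : Bool) (F : ℕ) {l : ℕ → ℕ} {r : ℕ} (hr2 : 2 ≤ r)
    (hna : l (r-1) ≤ l r) : MSet b F (inc l r) = ∅ := by
  apply MSet_empty_of_not_decr
  intro hall
  have := hall (r-1) (by omega)
  have hr1 : r - 1 + 1 = r := by omega
  rw [hr1, inc_apply, inc_apply, if_pos rfl, if_neg (by omega)] at this
  omega

lemma sum_dec_restrict (b : Bool) (g : ℕ) {l : ℕ → ℕ} (F : ℕ)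
    (hdec : ∀ r, 1 ≤ r → l (r+1) ≤ l r) :
    ∑ r ∈ Finset.Icc 1 F, (if 1 ≤ l r then (MSet b g (dec l r)).ncard else 0)
      = ∑ s ∈ remF l F, (MSet b g (dec l s)).ncard := by
  rw [remF, Finset.sum_filter]
  apply Finset.sum_congr rfl
  intro r hr
  simp only [Finset.mem_Icc] at hr
  by_cases hrem : l (r+1) < l r
  · rw [if_pos hrem, if_pos (by omega)]
  · rw [if_neg hrem]
    by_cases hl : 1 ≤ l r
    · rw [if_pos hl, MSet_dec_empty_of_not_rem b g hr.1 hl (by omega)]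
      simp
    · rw [if_neg hl]

lemma sum_inc_restrict (b : Bool) (g : ℕ) {l : ℕ → ℕ} (F : ℕ)
    (hdec : ∀ r, 1 ≤ r → l (r+1) ≤ l r) :
    ∑ r ∈ Finset.Icc 1 F, (MSet b g (inc l r)).ncard
      = ∑ r ∈ addF l F, (MSet b g (inc l r)).ncard := by
  rw [addF, Finset.sum_filter]
  apply Finset.sum_congr rfl
  intro r hr
  simp only [Finset.mem_Icc] at hr
  by_cases hadd : r = 1 ∨ l r < l (r-1)
  · rw [if_pos hadd]
  · rw [if_neg hadd]
    push_neg at hadd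
    rw [MSet_inc_empty_of_not_add b g (by omega) (by omega)]
    simp

/-- the main recurrence, `k ≥ 1` version. -/
lemma Nc_rec_part {f n : ℕ} (hf : 1 ≤ f) {l : ℕ → ℕ}
    (hdec : ∀ r, 1 ≤ r → l (r+1) ≤ l r) (hsupp : ∀ r, n < r → l r = 0)
    (hn1 : n + 1 ≤ f) :
    Nc f l = (∑ s ∈ remF l n, Nc (f-1) (dec l s))
      + (∑ r ∈ addF l (n+1), Nc (f-1) (inc l r)) := by
  unfold Nc
  rw [MSet_rec false hf l hdec]
  rw [if_neg (by simp)]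
  congr 1
  · rw [sum_dec_restrict false (f-1) f hdec, remF_eq hsupp (by omega)]
  · rw [sum_inc_restrict false (f-1) f hdec, addF_eq hsupp hn1]

/-- the main recurrence, `k = 0` (all-positive diagram size) version. -/
lemma Nc_rec_full {n : ℕ} (hn : 1 ≤ n) {l : ℕ → ℕ}
    (hdec : ∀ r, 1 ≤ r → l (r+1) ≤ l r) (hsupp : ∀ r, n < r → l r = 0)
    (hsize : ∑ r ∈ Finset.Icc 1 n, l r = n) :
    Nc n l = ∑ s ∈ remF l n, Nc (n-1) (dec l s) := by
  unfold Nc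
  rw [MSet_rec false hn l hdec]
  rw [if_neg (by simp)]
  have hz : ∑ r ∈ Finset.Icc 1 n, (MSet false (n-1) (inc l r)).ncard = 0 := by
    apply Finset.sum_eq_zero
    intro r hr
    simp only [Finset.mem_Icc] at hr
    rw [MSet_empty_of_size (l := inc l r) (M := n+1) (by
      rw [inc_size hsupp hsize hr.1 (by omega)]; omega)]
    simp
  rw [hz, add_zero, sum_dec_restrict false (n-1) n hdec, remF_eq hsupp le_rfl]

lemma Pc_rec_part {f n : ℕ} (hf : 1 ≤ f) {l : ℕ → ℕ}
    (hdec : ∀ r, 1 ≤ r → l (r+1) ≤ l r) (hsupp : ∀ r, n < r → l r = 0)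
    (hnf : n ≤ f) :
    Pc f l = ∑ s ∈ remF l n, Pc (f-1) (dec l s) := by
  unfold Pc
  rw [MSet_rec true hf l hdec]
  rw [if_pos rfl, add_zero]
  rw [sum_dec_restrict true (f-1) f hdec, remF_eq hsupp (by omega)]

lemma Nc_zero {l : ℕ → ℕ} (h : ∀ r, 1 ≤ r → l r = 0) : Nc 0 l = 1 := by
  unfold Nc
  rw [MSet_zero_eq h]
  exact Set.ncard_singleton _

lemma Pc_zero {l : ℕ → ℕ} (h : ∀ r, 1 ≤ r → l r = 0) : Pc 0 l = 1 := by
  unfold Pc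
  rw [MSet_zero_eq h]
  exact Set.ncard_singleton _

/-! cancellation identities for `dec`/`inc` -/

lemma dec_inc_self (l : ℕ → ℕ) (r : ℕ) : dec (inc l r) r = l := by
  funext t
  rw [dec_apply, inc_apply]
  by_cases h : t = r
  · rw [if_pos h, if_pos rfl]; subst h; omega
  · rw [if_neg h, inc_apply, if_neg h]

lemma inc_dec_self {l : ℕ → ℕ} {s : ℕ} (h : 1 ≤ l s) : inc (dec l s) s = l := by
  funext t
  rw [inc_apply, dec_apply]
  by_cases ht : t = s
  · rw [if_pos ht, if_pos rfl]; subst ht; omega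
  · rw [if_neg ht, dec_apply, if_neg ht]

lemma dec_inc_comm {l : ℕ → ℕ} {r s : ℕ} (hne : r ≠ s) :
    dec (inc l r) s = inc (dec l s) r := by
  funext t
  simp only [dec_apply, inc_apply]
  by_cases h1 : t = s
  · rw [if_pos h1, if_pos h1, if_neg (show ¬(s = r) by omega), if_neg (by omega)]
  · rw [if_neg h1, if_neg h1]
    by_cases h2 : t = r
    · rw [if_pos h2, if_pos h2, if_neg (show ¬(r = s) by omega)]
    · rw [if_neg h2, if_neg h2]

/-! ### The commutation identity -/

section UD

variable {l : ℕ → ℕ} {n : ℕ}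

lemma swapXY (hdec : ∀ r, 1 ≤ r → l (r+1) ≤ l r) (hsupp : ∀ r, n < r → l r = 0)
    (hsize : ∑ r ∈ Finset.Icc 1 n, l r = n) {r s : ℕ}
    (hr : r ∈ addF l (n+1)) (hs : s ∈ (remF (inc l r) (n+1)).erase r) :
    s ∈ remF l n ∧ r ∈ (addF (dec l s) n).erase s := by
  rw [Finset.mem_erase] at hs
  obtain ⟨hsr, hs⟩ := hs
  simp only [addF, remF, Finset.mem_filter, Finset.mem_Icc] at hr hs
  obtain ⟨⟨hr1, hrB⟩, hra⟩ := hr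
  obtain ⟨⟨hs1, hsB⟩, hrem'⟩ := hs
  have hincs : inc l r s = l s := by rw [inc_apply, if_neg hsr]
  have hlrem : l (s+1) < l s := by
    by_cases hc : s + 1 = r
    · rw [inc_apply, if_pos hc, hincs] at hrem'
      have : l (s+1) = l r := by rw [hc]
      omega
    · rw [inc_apply, if_neg hc, hincs] at hrem'
      exact hrem'
  have hsn : s ≤ n := rem_le hsupp hlrem
  have hn1 : 1 ≤ n := by omega
  have hrn : r ≤ n := by
    by_contra hcon
    have hreq : r = n + 1 := by omega
    have hr2 : 2 ≤ r := by omega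
    have hlt : l r < l (r-1) := by rcases hra with h | h; omega; exact h
    have hln : 1 ≤ l n := by
      have h0 : l r = 0 := hsupp r (by omega)
      have : r - 1 = n := by omega
      rw [this] at hlt
      omega
    have hall := all_one hdec hsize hn1 hln
    have hls1 : l s = 1 := hall s hs1 hsn
    by_cases hc : s + 1 = r
    · rw [inc_apply, if_pos hc, hincs] at hrem'
      have : l r = 0 := hsupp r (by omega)
      omega
    · rw [inc_apply, if_neg hc, hincs] at hrem'
      have hs1n : s + 1 ≤ n := by omega
      have := hall (s+1) (by omega) hs1n
      omega
  constructor
  · exact Finset.mem_filter.mpr ⟨Finset.mem_Icc.mpr ⟨hs1, hsn⟩, hlrem⟩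
  · rw [Finset.mem_erase]
    refine ⟨by omega, Finset.mem_filter.mpr ⟨Finset.mem_Icc.mpr ⟨hr1, hrn⟩, ?_⟩⟩
    rcases hra with h1 | hlt
    · exact Or.inl h1
    · right
      have hdr : dec l s r = l r := by rw [dec_apply, if_neg (by omega)]
      rw [hdr]
      by_cases hc2 : r - 1 = s
      · have hc : s + 1 = r := by omega
        rw [inc_apply, if_pos hc, hincs] at hrem'
        rw [hc2, dec_apply, if_pos rfl]
        omega
      · rw [dec_apply, if_neg hc2]
        exact hlt

lemma swapYX (hdec : ∀ r, 1 ≤ r → l (r+1) ≤ l r) (hsupp : ∀ r, n < r → l r = 0)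
    {s t : ℕ} (hs : s ∈ remF l n) (ht : t ∈ (addF (dec l s) n).erase s) :
    t ∈ addF l (n+1) ∧ s ∈ (remF (inc l t) (n+1)).erase t := by
  rw [Finset.mem_erase] at ht
  obtain ⟨htne, ht⟩ := ht
  simp only [addF, remF, Finset.mem_filter, Finset.mem_Icc] at hs ht
  obtain ⟨⟨hs1, hsn⟩, hrem⟩ := hs
  obtain ⟨⟨ht1, htn⟩, hta⟩ := ht
  have hls : 1 ≤ l s := by omega
  have hdt : dec l s t = l t := by rw [dec_apply, if_neg htne]
  constructor
  · refine Finset.mem_filter.mpr ⟨Finset.mem_Icc.mpr ⟨ht1, by omega⟩, ?_⟩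
    rcases hta with h1 | hlt
    · exact Or.inl h1
    · right
      rw [hdt] at hlt
      by_cases hc : t - 1 = s
      · rw [hc, dec_apply, if_pos rfl] at hlt
        have : l (t-1) = l s := by rw [hc]
        omega
      · rw [dec_apply, if_neg hc] at hlt
        exact hlt
  · rw [Finset.mem_erase]
    refine ⟨by omega, Finset.mem_filter.mpr ⟨Finset.mem_Icc.mpr ⟨hs1, by omega⟩, ?_⟩⟩
    have hincs : inc l t s = l s := by rw [inc_apply, if_neg (by omega)]
    rw [hincs]
    by_cases hc : s + 1 = t
    · rw [inc_apply, if_pos hc]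
      rcases hta with h1 | hlt
      · omega
      · rw [hdt] at hlt
        have hc2 : t - 1 = s := by omega
        rw [hc2, dec_apply, if_pos rfl] at hlt
        omega
    · rw [inc_apply, if_neg hc]
      exact hrem

lemma UD : ∀ n : ℕ, ∀ l : ℕ → ℕ,
    (∀ r, 1 ≤ r → l (r+1) ≤ l r) → (∀ r, n < r → l r = 0) →
    (∑ r ∈ Finset.Icc 1 n, l r = n) →
    ∑ r ∈ addF l (n+1), Pc (n+1) (inc l r) = (n+1) * Pc n l := by
  intro n
  induction n using Nat.strong_induction_on with
  | _ n IH =>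
    intro l hdec hsupp hsize
    rcases Nat.eq_zero_or_pos n with rfl | hn1
    · -- base case n = 0
      have hl0 : ∀ r, 1 ≤ r → l r = 0 := fun r hr => hsupp r (by omega)
      have haddeq : addF l 1 = {1} := by
        ext r
        simp only [addF, Finset.mem_filter, Finset.mem_Icc, Finset.mem_singleton]
        omega
      rw [zero_add, haddeq, Finset.sum_singleton, one_mul, Pc_zero hl0]
      -- Pc 1 (inc l 1) = 1
      have hdec' : ∀ r, 1 ≤ r → inc l 1 (r+1) ≤ inc l 1 r :=
        inc_dec hdec le_rfl (Or.inl rfl)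
      have hsupp' : ∀ r, 1 < r → inc l 1 r = 0 := by
        intro r hr
        rw [inc_apply, if_neg (by omega)]
        exact hl0 r (by omega)
      have hrec := Pc_rec_part le_rfl hdec' hsupp' le_rfl
      have hremeq : remF (inc l 1) 1 = {1} := by
        ext s
        simp only [remF, Finset.mem_filter, Finset.mem_Icc, Finset.mem_singleton]
        constructor
        · rintro ⟨⟨h1, h2⟩, _⟩; omega
        · rintro rfl
          refine ⟨⟨le_rfl, le_rfl⟩, ?_⟩
          rw [inc_apply, if_neg (by omega), inc_apply, if_pos rfl, hl0 2 (by omega)]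
          omega
      rw [hremeq, Finset.sum_singleton] at hrec
      rw [hrec, dec_inc_self, Pc_zero hl0]
    · -- inductive step
      have hnn : n - 1 + 1 = n := by omega
      have hPcb : Pc n l = ∑ s ∈ remF l n, Pc (n-1) (dec l s) :=
        Pc_rec_part hn1 hdec hsupp le_rfl
      -- expand each summand of the LHS
      have hPr : ∀ r ∈ addF l (n+1), Pc (n+1) (inc l r) =
          Pc n l + ∑ s ∈ (remF (inc l r) (n+1)).erase r, Pc n (dec (inc l r) s) := by
        intro r hr
        have hrmem := hr
        simp only [addF, Finset.mem_filter, Finset.mem_Icc] at hrmem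
        obtain ⟨⟨hr1, hrB⟩, hra⟩ := hrmem
        have hdec' := inc_dec hdec hr1 hra
        have hsupp' := inc_supp hsupp hrB
        have hrec := Pc_rec_part (f := n+1) (n := n+1) (by omega) hdec' hsupp' le_rfl
        have hstep : n + 1 - 1 = n := by omega
        rw [hstep] at hrec
        have hrinrem : r ∈ remF (inc l r) (n+1) := by
          simp only [remF, Finset.mem_filter, Finset.mem_Icc]
          refine ⟨⟨hr1, hrB⟩, ?_⟩
          rw [inc_apply, if_neg (by omega), inc_apply, if_pos rfl]
          have := hdec r hr1
          omega
        rw [hrec, ← Finset.add_sum_erase _ _ hrinrem, dec_inc_self]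
      rw [Finset.sum_congr rfl hPr]
      rw [Finset.sum_add_distrib, Finset.sum_const, smul_eq_mul]
      -- the double sum from the IH side
      have hIH : ∀ s ∈ remF l n,
          ∑ t ∈ addF (dec l s) n, Pc n (inc (dec l s) t) = n * Pc (n-1) (dec l s) := by
        intro s hs
        have hsmem := hs
        simp only [remF, Finset.mem_filter, Finset.mem_Icc] at hsmem
        obtain ⟨⟨hs1, hsn⟩, hrem⟩ := hsmem
        have := IH (n-1) (by omega) (dec l s) (dec_dec hdec hs1 hrem)
          (dec_supp hdec hsupp hsize hs1 hrem) (dec_size hdec hsupp hsize hs1 hrem)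
        rw [hnn] at this
        exact this
      have hdiag2 : ∀ s ∈ remF l n,
          ∑ t ∈ addF (dec l s) n, Pc n (inc (dec l s) t) =
          Pc n l + ∑ t ∈ (addF (dec l s) n).erase s, Pc n (inc (dec l s) t) := by
        intro s hs
        have hsmem := hs
        simp only [remF, Finset.mem_filter, Finset.mem_Icc] at hsmem
        obtain ⟨⟨hs1, hsn⟩, hrem⟩ := hsmem
        have hls : 1 ≤ l s := by omega
        have hsin : s ∈ addF (dec l s) n := by
          simp only [addF, Finset.mem_filter, Finset.mem_Icc]
          refine ⟨⟨hs1, hsn⟩, ?_⟩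
          rcases eq_or_ne s 1 with rfl | hne
          · exact Or.inl rfl
          · right
            rw [dec_apply, if_pos rfl, dec_apply, if_neg (by omega)]
            have := l_anti hdec (s-1) s (by omega) (by omega)
            omega
        rw [← Finset.add_sum_erase _ _ hsin, inc_dec_self hls]
      -- the two off-diagonal double sums agree
      have hXY : ∑ r ∈ addF l (n+1), ∑ s ∈ (remF (inc l r) (n+1)).erase r,
            Pc n (dec (inc l r) s)
          = ∑ s ∈ remF l n, ∑ t ∈ (addF (dec l s) n).erase s,
            Pc n (inc (dec l s) t) := by
        rw [Finset.sum_sigma', Finset.sum_sigma']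
        apply Finset.sum_nbij' (i := fun p => (⟨p.2, p.1⟩ : (_ : ℕ) × ℕ))
          (j := fun p => (⟨p.2, p.1⟩ : (_ : ℕ) × ℕ))
        · rintro ⟨r, s⟩ hp
          rw [Finset.mem_sigma] at hp ⊢
          exact swapXY hdec hsupp hsize hp.1 hp.2
        · rintro ⟨s, t⟩ hp
          rw [Finset.mem_sigma] at hp ⊢
          exact swapYX hdec hsupp hp.1 hp.2
        · rintro ⟨r, s⟩ hp; rfl
        · rintro ⟨s, t⟩ hp; rfl
        · rintro ⟨r, s⟩ hp
          rw [Finset.mem_sigma] at hp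
          have hsr : s ≠ r := (Finset.mem_erase.mp hp.2).1
          rw [dec_inc_comm (show r ≠ s by omega)]
      -- assemble
      have hsum2 : ∑ s ∈ remF l n, ∑ t ∈ addF (dec l s) n, Pc n (inc (dec l s) t)
          = n * Pc n l := by
        rw [Finset.sum_congr rfl hIH, ← Finset.mul_sum, ← hPcb]
      rw [Finset.sum_congr rfl hdiag2, Finset.sum_add_distrib, Finset.sum_const,
        smul_eq_mul] at hsum2
      have hcards : (addF l (n+1)).card = (remF l n).card + 1 := by
        rw [addF_card hdec hsupp, remF_eq hsupp (by omega)]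
      rw [hXY, hcards]
      have hY := hsum2
      have e1 : ((remF l n).card + 1) * Pc n l = (remF l n).card * Pc n l + Pc n l := by ring
      have e2 : (n+1) * Pc n l = n * Pc n l + Pc n l := by ring
      omega

end UD

/-! ### The master theorem -/

lemma master : ∀ f : ℕ, ∀ k : ℕ, ∀ l : ℕ → ℕ, 2 * k ≤ f →
    (∀ r, 1 ≤ r → l (r+1) ≤ l r) → (∀ r, f - 2*k < r → l r = 0) →
    (∑ r ∈ Finset.Icc 1 (f - 2*k), l r = f - 2*k) →
    Nc f l * ((f - 2*k).factorial * 2^k * k.factorial) =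
      f.factorial * Pc (f - 2*k) l := by
  intro f
  induction f using Nat.strong_induction_on with
  | _ f IH =>
    intro k l hk hdec hsupp hsize
    rcases Nat.eq_zero_or_pos f with rfl | hf1
    · -- f = 0
      have hk0 : k = 0 := by omega
      subst hk0
      have hl0 : ∀ r, 1 ≤ r → l r = 0 := fun r hr => hsupp r (by omega)
      simp [Nc_zero hl0, Pc_zero hl0]
    · set n := f - 2*k with hn
      rcases Nat.eq_zero_or_pos k with rfl | hk1
      · -- k = 0 : no negative letters possible
        have hnf : n = f := by omega
        have hNP : ∀ s ∈ remF l n, Nc (f-1) (dec l s) = Pc (f-1) (dec l s) := by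
          intro s hs
          simp only [remF, Finset.mem_filter, Finset.mem_Icc] at hs
          obtain ⟨⟨hs1, hsn⟩, hrem⟩ := hs
          have hsupp' := dec_supp hdec hsupp hsize hs1 hrem
          have hsize' := dec_size hdec hsupp hsize hs1 hrem
          have := IH (f-1) (by omega) 0 (dec l s) (by omega)
            (dec_dec hdec hs1 hrem)
            (by intro r hr; exact hsupp' r (by omega))
            (by have : f - 1 - 2*0 = n - 1 := by omega
                rw [this]; exact hsize')
          simp only [Nat.mul_zero, Nat.sub_zero, pow_zero, mul_one,
            Nat.factorial_zero] at this
          exact Nat.eq_of_mul_eq_mul_left (Nat.factorial_pos (f-1))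
            (by rw [mul_comm] at this; rw [this])
        have hrecN : Nc f l = ∑ s ∈ remF l n, Nc (f-1) (dec l s) := by
          rw [hnf] at hsupp hsize ⊢
          exact Nc_rec_full hf1 hdec hsupp hsize
        have hrecP : Pc f l = ∑ s ∈ remF l n, Pc (f-1) (dec l s) := by
          rw [hnf] at hsupp ⊢
          exact Pc_rec_part hf1 hdec hsupp le_rfl
        have : Nc f l = Pc f l := by
          rw [hrecN, hrecP]
          exact Finset.sum_congr rfl hNP
        rw [hnf, this]
        simp only [pow_zero, mul_one, Nat.factorial_zero]
        ring
      · -- k ≥ 1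
        have hn1f : n + 1 ≤ f := by omega
        have hrec := Nc_rec_part hf1 hdec hsupp hn1f
        -- D-part
        have hD : (∑ s ∈ remF l n, Nc (f-1) (dec l s)) * (n.factorial * 2^k * k.factorial)
            = n * ((f-1).factorial * Pc n l) := by
          rcases Nat.eq_zero_or_pos n with hn0 | hnpos
          · have : remF l n = ∅ := by
              ext s
              simp only [remF, Finset.mem_filter, Finset.mem_Icc, Finset.notMem_empty,
                iff_false]
              omega
            rw [this, hn0]
            simp
          · have hPcb : Pc n l = ∑ s ∈ remF l n, Pc (n-1) (dec l s) :=
              Pc_rec_part hnpos hdec hsupp le_rfl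
            rw [Finset.sum_mul]
            have hterm : ∀ s ∈ remF l n,
                Nc (f-1) (dec l s) * (n.factorial * 2^k * k.factorial)
                = n * ((f-1).factorial * Pc (n-1) (dec l s)) := by
              intro s hs
              simp only [remF, Finset.mem_filter, Finset.mem_Icc] at hs
              obtain ⟨⟨hs1, hsn⟩, hrem⟩ := hs
              have hIHs := IH (f-1) (by omega) k (dec l s) (by omega)
                (dec_dec hdec hs1 hrem)
                (by intro r hr
                    exact dec_supp hdec hsupp hsize hs1 hrem r (by omega))
                (by have : f - 1 - 2*k = n - 1 := by omega
                    rw [this]; exact dec_size hdec hsupp hsize hs1 hrem)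
              have hstep : f - 1 - 2*k = n - 1 := by omega
              rw [hstep] at hIHs
              have hfac : n.factorial = n * (n-1).factorial := by
                rw [← Nat.mul_factorial_pred hnpos.ne']
              calc Nc (f-1) (dec l s) * (n.factorial * 2^k * k.factorial)
                  = n * (Nc (f-1) (dec l s) * ((n-1).factorial * 2^k * k.factorial)) := by
                    rw [hfac]; ring
                _ = n * ((f-1).factorial * Pc (n-1) (dec l s)) := by rw [hIHs]
            rw [Finset.sum_congr rfl hterm, ← Finset.mul_sum, ← Finset.mul_sum, ← hPcb]
        -- U-part
        have hU : (∑ r ∈ addF l (n+1), Nc (f-1) (inc l r)) *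
              ((n+1) * (n.factorial * 2^k * k.factorial))
            = (2*k) * ((f-1).factorial * ((n+1) * Pc n l)) := by
          have hUD := UD n l hdec hsupp hsize
          rw [Finset.sum_mul]
          have hterm : ∀ r ∈ addF l (n+1),
              Nc (f-1) (inc l r) * ((n+1) * (n.factorial * 2^k * k.factorial))
              = (2*k) * ((f-1).factorial * Pc (n+1) (inc l r)) := by
            intro r hr
            simp only [addF, Finset.mem_filter, Finset.mem_Icc] at hr
            obtain ⟨⟨hr1, hrB⟩, hra⟩ := hr
            have hIHr := IH (f-1) (by omega) (k-1) (inc l r) (by omega)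
              (inc_dec hdec hr1 hra)
              (by intro t ht
                  have : f - 1 - 2*(k-1) = n + 1 := by omega
                  exact inc_supp hsupp hrB t (by omega))
              (by have : f - 1 - 2*(k-1) = n + 1 := by omega
                  rw [this]; exact inc_size hsupp hsize hr1 hrB)
            have hstep : f - 1 - 2*(k-1) = n + 1 := by omega
            rw [hstep] at hIHr
            have hfac1 : (n+1).factorial = (n+1) * n.factorial := Nat.factorial_succ n
            have hfac2 : 2^k = 2^(k-1) * 2 := by
              rw [← pow_succ]
              congr 1
              omega
            have hfac3 : k.factorial = k * (k-1).factorial := by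
              rw [← Nat.mul_factorial_pred hk1.ne']
            calc Nc (f-1) (inc l r) * ((n+1) * (n.factorial * 2^k * k.factorial))
                = (2*k) * (Nc (f-1) (inc l r) *
                    ((n+1).factorial * 2^(k-1) * (k-1).factorial)) := by
                  rw [hfac1, hfac2, hfac3]; ring
              _ = (2*k) * ((f-1).factorial * Pc (n+1) (inc l r)) := by rw [hIHr]
          rw [Finset.sum_congr rfl hterm, ← Finset.mul_sum, ← Finset.mul_sum, hUD]
        -- assemble
        have hff : f.factorial = (n + 2*k) * (f-1).factorial := by
          have : f = n + 2*k := by omega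
          rw [← this, ← Nat.mul_factorial_pred hf1.ne']
        have key : (n+1) * (Nc f l * (n.factorial * 2^k * k.factorial))
            = (n+1) * (f.factorial * Pc n l) := by
          rw [hrec]
          calc (n+1) * ((((∑ s ∈ remF l n, Nc (f-1) (dec l s)) +
                ∑ r ∈ addF l (n+1), Nc (f-1) (inc l r))) * (n.factorial * 2^k * k.factorial))
              = (n+1) * ((∑ s ∈ remF l n, Nc (f-1) (dec l s)) *
                  (n.factorial * 2^k * k.factorial)) +
                (∑ r ∈ addF l (n+1), Nc (f-1) (inc l r)) *
                  ((n+1) * (n.factorial * 2^k * k.factorial)) := by ring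
            _ = (n+1) * (n * ((f-1).factorial * Pc n l)) +
                (2*k) * ((f-1).factorial * ((n+1) * Pc n l)) := by rw [hD, hU]
            _ = (n+1) * ((n + 2*k) * (f-1).factorial * Pc n l) := by ring
            _ = (n+1) * (f.factorial * Pc n l) := by rw [hff]
        exact Nat.eq_of_mul_eq_mul_left (Nat.succ_pos n) key

end PL

/-- Let `2k ≤ f` and let `λ` be a partition with `|λ| = f − 2k`.
Then the number of permutation lattices of order `f` with diagram `λ` equals
`f! / ((f−2k)!·2^k·k!)` times the number of permutation lattices of order `f−2k` with
diagram `λ` all of whose entries are positive (i.e. the number of standard Young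
tableaux of shape `λ`).  To avoid division, the identity is stated in the multiplied
form `#S · (f−2k)! · 2^k · k! = f! · #T`.  (Words are normalized to vanish outside the
index range `{1,…,order}`, so that each permutation lattice has a unique
representative and the sets below are in bijection with the sets of lattices.) -/
theorem card_permLattices (f k : ℕ) (hk : 2 * k ≤ f)
    (lam : ℕ →₀ ℕ) (hlam0 : lam 0 = 0)
    (hlam : ∀ r : ℕ, 1 ≤ r → lam (r + 1) ≤ lam r)
    (hsize : (lam.sum fun _ n => n) = f - 2 * k) :
    ({w : ℕ → ℤ | IsPermLattice f w ∧ (∀ j, j = 0 ∨ f < j → w j = 0) ∧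
        ∀ r : ℕ, 1 ≤ r → hatCount w f (r : ℤ) = (lam r : ℤ)}.ncard)
      * ((f - 2 * k).factorial * 2 ^ k * k.factorial) =
    f.factorial *
      ({w : ℕ → ℤ | IsPermLattice (f - 2 * k) w ∧
        (∀ j, j = 0 ∨ f - 2 * k < j → w j = 0) ∧
        (∀ r : ℕ, 1 ≤ r → hatCount w (f - 2 * k) (r : ℤ) = (lam r : ℤ)) ∧
        ∀ j, 1 ≤ j → j ≤ f - 2 * k → 0 < w j}.ncard) := by
  classical
  have hdec : ∀ r, 1 ≤ r → lam (r+1) ≤ lam r := fun r hr => hlam r hr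
  have hsum_le : ∀ M : Finset ℕ, ∑ r ∈ M, lam r ≤ lam.sum (fun _ m => m) := by
    intro M
    have h1 : (lam.sum fun _ m => m) = ∑ r ∈ lam.support, lam r := rfl
    have h2 : ∑ r ∈ lam.support, lam r = ∑ r ∈ M ∪ lam.support, lam r :=
      Finset.sum_subset Finset.subset_union_right
        (fun x _ hnx => Finsupp.notMem_support_iff.mp hnx)
    rw [h1, h2]
    exact Finset.sum_le_sum_of_subset Finset.subset_union_left
  have hsupp : ∀ r, f - 2*k < r → lam r = 0 := by
    intro r hr
    by_contra hcon
    have h1 : ∀ t, 1 ≤ t → t ≤ r → 1 ≤ lam t := by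
      intro t ht1 ht2
      have := PL.l_anti (l := fun r => lam r) hdec t r ht1 ht2
      omega
    have h2 : (r:ℕ) ≤ ∑ t ∈ Finset.Icc 1 r, lam t := by
      calc r = ∑ t ∈ Finset.Icc 1 r, 1 := by simp
      _ ≤ _ := Finset.sum_le_sum (fun t ht => h1 t (Finset.mem_Icc.mp ht).1
          (Finset.mem_Icc.mp ht).2)
    have h3 := hsum_le (Finset.Icc 1 r)
    rw [hsize] at h3
    omega
  have hsizeI : ∑ r ∈ Finset.Icc 1 (f - 2*k), lam r = f - 2*k := by
    have hsub : lam.support ⊆ Finset.Icc 1 (f - 2*k) := by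
      intro a ha
      rw [Finsupp.mem_support_iff] at ha
      simp only [Finset.mem_Icc]
      constructor
      · rcases Nat.eq_zero_or_pos a with rfl | h
        · exact absurd hlam0 ha
        · omega
      · by_contra h'
        push_neg at h'
        exact ha (hsupp a h')
    calc ∑ r ∈ Finset.Icc 1 (f - 2*k), lam r
        = ∑ r ∈ lam.support, lam r :=
          (Finset.sum_subset hsub (fun x _ hnx => Finsupp.notMem_support_iff.mp hnx)).symm
      _ = (lam.sum fun _ m => m) := rfl
      _ = f - 2*k := hsize
  have hmain := PL.master f k (fun r => lam r) hk hdec hsupp hsizeI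
  have hset1 : {w : ℕ → ℤ | IsPermLattice f w ∧ (∀ j, j = 0 ∨ f < j → w j = 0) ∧
      ∀ r : ℕ, 1 ≤ r → hatCount w f (r : ℤ) = (lam r : ℤ)} =
      PL.MSet false f (fun r => lam r) := by
    ext w
    constructor
    · rintro ⟨a, b, c⟩
      exact ⟨⟨a, b, c⟩, by simp⟩
    · rintro ⟨⟨a, b, c⟩, _⟩
      exact ⟨a, b, c⟩
  have hset2 : {w : ℕ → ℤ | IsPermLattice (f - 2 * k) w ∧
      (∀ j, j = 0 ∨ f - 2 * k < j → w j = 0) ∧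
      (∀ r : ℕ, 1 ≤ r → hatCount w (f - 2 * k) (r : ℤ) = (lam r : ℤ)) ∧
      ∀ j, 1 ≤ j → j ≤ f - 2 * k → 0 < w j} =
      PL.MSet true (f - 2*k) (fun r => lam r) := by
    ext w
    constructor
    · rintro ⟨a, b, c, d⟩
      exact ⟨⟨a, b, c⟩, fun _ => d⟩
    · rintro ⟨⟨a, b, c⟩, d⟩
      exact ⟨a, b, c, d rfl⟩
  rw [hset1, hset2]
  exact hmain
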